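/- Let t₁, t₂ ∈ ℝ with t₁² ≠ 4t₂², and set a₀₂ = −t₁(t₁² + 4t₂²)/(2(t₁ − 2t₂)(t₁ + 2t₂)), b₂₀ = 2t₁²t₂/(4t₂² − t₁²), b₁₁ = t₁, b₀₂ = t₂, b₃₀ = b₂₁ = b₁₂ = 0. Then all of the following hold: −2b₀₂b₁₁² + 4b₀₂²b₂₀ − b₁₁²b₂₀ = 0, 2a₀₂b₁₁ + b₁₁² − 4b₀₂b₂₀ = 0, 2a₀₂b₀₂ − b₀₂b₁₁ − b₁₁b₂₀ = 0, and 4a₀₂² − b₁₁² − 4b₂₀² = 0. -/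

import Mathlib

/-- The rational map parametrizes the component `V₃` of the center variety. -/
theorem stmt_9 (t1 t2 : ℝ) (h : t1 ^ 2 ≠ 4 * t2 ^ 2)
    (a02 b20 b30 b11 b21 b02 b12 : ℝ)
    (ha : a02 = -(t1 * (t1 ^ 2 + 4 * t2 ^ 2)) / (2 * (t1 - 2 * t2) * (t1 + 2 * t2)))
    (hb20 : b20 = 2 * t1 ^ 2 * t2 / (4 * t2 ^ 2 - t1 ^ 2))
    (hb11 : b11 = t1) (hb02 : b02 = t2)
    (hb30 : b30 = 0) (hb21 : b21 = 0) (hb12 : b12 = 0) :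
    -2 * b02 * b11 ^ 2 + 4 * b02 ^ 2 * b20 - b11 ^ 2 * b20 = 0
    ∧ 2 * a02 * b11 + b11 ^ 2 - 4 * b02 * b20 = 0
    ∧ 2 * a02 * b02 - b02 * b11 - b11 * b20 = 0
    ∧ 4 * a02 ^ 2 - b11 ^ 2 - 4 * b20 ^ 2 = 0 := by
  have h1 : t1 - 2 * t2 ≠ 0 := fun e => h (by rw [show t1 = 2 * t2 by linarith]; ring)
  have h2 : t1 + 2 * t2 ≠ 0 := fun e => h (by rw [show t1 = -(2 * t2) by linarith]; ring)
  have h3 : 4 * t2 ^ 2 - t1 ^ 2 ≠ 0 := fun e => h (by linarith)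
  have h4 : t1 - t2 * 2 ≠ 0 := by contrapose! h1; linarith
  have h5 : t1 + t2 * 2 ≠ 0 := by contrapose! h2; linarith
  have h6 : t2 ^ 2 * 4 - t1 ^ 2 ≠ 0 := by contrapose! h3; linarith
  subst ha hb20 hb11 hb02 hb30 hb21 hb12
  refine ⟨?_, ?_, ?_, ?_⟩ <;> field_simp <;> ring
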